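/- arXiv:2406.11712 — 11 statements merged into one kernel-verified Lean document; each statement's English description precedes it below -/
import Mathlib

section
/- Let G be an n×n real matrix, λ a real number with I − λG invertible, C := (I − λG)⁻¹, ρ := rσ² ≥ 0, and M := Cᵀ(I − λ(G + Gᵀ))C + ρ·I. If M is positive definite, then the principal's reduced expected profit π(α) = αᵀCᵀ1 − ½ αᵀMα has a unique maximizer over ℝⁿ, given by α* = M⁻¹Cᵀ1, and moreover α* = (1/(1+ρ))·[I − (λ²/(1+ρ))·(GC)ᵀ(GC)]⁻¹ Cᵀ1 (the latter inverse existing). -/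
open Matrix

/-- If `M = Cᵀ(I − λ(G+Gᵀ))C + ρI` is positive definite, the reduced
profit `π(α) = αᵀCᵀ1 − ½αᵀMα` has the unique maximizer `α* = M⁻¹Cᵀ1`, which moreover
equals `(1/(1+ρ))[I − (λ²/(1+ρ))(GC)ᵀ(GC)]⁻¹Cᵀ1`, that inverse existing. -/
theorem stmt_2 (n : ℕ) (G : Matrix (Fin n) (Fin n) ℝ) (lam ρ : ℝ) (hρ : 0 ≤ ρ)
    (hinv : IsUnit ((1 : Matrix (Fin n) (Fin n) ℝ) - lam • G)) :
    let C := ((1 : Matrix (Fin n) (Fin n) ℝ) - lam • G)⁻¹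
    let M := Cᵀ * ((1 : Matrix (Fin n) (Fin n) ℝ) - lam • (G + Gᵀ)) * C +
      ρ • (1 : Matrix (Fin n) (Fin n) ℝ)
    let one : Fin n → ℝ := fun _ => 1
    let αstar := M⁻¹.mulVec (Cᵀ.mulVec one)
    M.PosDef →
    (∀ α : Fin n → ℝ, α ≠ αstar →
        α ⬝ᵥ Cᵀ.mulVec one - (1 / 2) * (α ⬝ᵥ M.mulVec α) <
          αstar ⬝ᵥ Cᵀ.mulVec one - (1 / 2) * (αstar ⬝ᵥ M.mulVec αstar)) ∧
      IsUnit ((1 : Matrix (Fin n) (Fin n) ℝ) - (lam ^ 2 / (1 + ρ)) • ((G * C)ᵀ * (G * C))) ∧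
      αstar = (1 / (1 + ρ)) •
        (((1 : Matrix (Fin n) (Fin n) ℝ) -
            (lam ^ 2 / (1 + ρ)) • ((G * C)ᵀ * (G * C)))⁻¹.mulVec (Cᵀ.mulVec one)) := by
  intro C M one αstar hM
  set A : Matrix (Fin n) (Fin n) ℝ := 1 - lam • G with hA
  have hdet : IsUnit A.det := (Matrix.isUnit_iff_isUnit_det A).mp hinv
  have hAC : A * C = 1 := Matrix.mul_nonsing_inv A hdet
  have hCA : C * A = 1 := Matrix.nonsing_inv_mul A hdet
  have hρ1 : (0:ℝ) < 1 + ρ := by linarith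
  have hCAt : Cᵀ * Aᵀ = 1 := by rw [← transpose_mul, hAC, transpose_one]
  -- λ G C = C - 1
  have hGC : lam • (G * C) = C - 1 := by
    have h : C - lam • (G * C) = 1 := by
      calc C - lam • (G * C) = (1 - lam • G) * C := by
            rw [sub_mul, one_mul, smul_mul_assoc]
        _ = 1 := by rw [← hA, hAC]
    linear_combination (norm := abel) -h
  -- key identity
  set P : Matrix (Fin n) (Fin n) ℝ := (G * C)ᵀ * (G * C) with hP
  have hP2 : (lam ^ 2) • P = Cᵀ * C - Cᵀ - C + 1 := by
    have : (lam ^ 2) • P = (lam • (G * C))ᵀ * (lam • (G * C)) := by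
      rw [transpose_smul, smul_mul_assoc, mul_smul_comm, smul_smul, sq]
    rw [this, hGC, transpose_sub, transpose_one]
    noncomm_ring
  have hmid : (1 : Matrix (Fin n) (Fin n) ℝ) - lam • (G + Gᵀ) = A + Aᵀ - 1 := by
    rw [hA, transpose_sub, transpose_smul, transpose_one, smul_add]
    abel
  have h2 : Cᵀ * ((1 : Matrix (Fin n) (Fin n) ℝ) - lam • (G + Gᵀ)) * C
      = Cᵀ + C - Cᵀ * C := by
    rw [hmid]
    have e : Cᵀ * (A + Aᵀ - 1) * C = Cᵀ * (A * C) + (Cᵀ * Aᵀ) * C - Cᵀ * C := by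
      noncomm_ring
    rw [e, hAC, hCAt, mul_one, one_mul]
  have hkey : M = (1 + ρ) • (1 : Matrix (Fin n) (Fin n) ℝ) - (lam ^ 2) • P := by
    show Cᵀ * ((1 : Matrix (Fin n) (Fin n) ℝ) - lam • (G + Gᵀ)) * C + ρ • 1 = _
    rw [h2, hP2, add_smul, one_smul]
    abel
  set N : Matrix (Fin n) (Fin n) ℝ := 1 - (lam ^ 2 / (1 + ρ)) • P with hN
  have hMN : M = (1 + ρ) • N := by
    rw [hkey, hN, smul_sub, smul_smul]
    congr 2
    field_simp
  have hMunit : IsUnit M := hM.isUnit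
  have hMdet : IsUnit M.det := (Matrix.isUnit_iff_isUnit_det M).mp hMunit
  have hMMinv : M * M⁻¹ = 1 := Matrix.mul_nonsing_inv M hMdet
  have hMinvM : M⁻¹ * M = 1 := Matrix.nonsing_inv_mul M hMdet
  have hN' : N = (1 + ρ)⁻¹ • M := by
    rw [hMN, smul_smul, inv_mul_cancel₀ hρ1.ne', one_smul]
  have hNdet : IsUnit N.det := by
    rw [hN', Matrix.det_smul]
    simp only [Fintype.card_fin]
    exact (IsUnit.pow n (isUnit_iff_ne_zero.mpr (inv_ne_zero hρ1.ne'))).mul hMdet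
  have hNunit : IsUnit N := (Matrix.isUnit_iff_isUnit_det N).mpr hNdet
  have hNNinv : N * N⁻¹ = 1 := Matrix.mul_nonsing_inv N hNdet
  set v : Fin n → ℝ := Cᵀ.mulVec one with hv
  have hMαstar : M *ᵥ αstar = v := by
    show M *ᵥ (M⁻¹ *ᵥ v) = v
    rw [Matrix.mulVec_mulVec, hMMinv, Matrix.one_mulVec]
  -- symmetry
  have hMsym : Mᵀ = M := by
    have := hM.1
    rwa [Matrix.IsHermitian, conjTranspose_eq_transpose_of_trivial] at this
  have hsym : ∀ x y : Fin n → ℝ, x ⬝ᵥ M *ᵥ y = y ⬝ᵥ M *ᵥ x := by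
    intro x y
    calc x ⬝ᵥ M *ᵥ y = (x ᵥ* M) ⬝ᵥ y := Matrix.dotProduct_mulVec x M y
      _ = (Mᵀ *ᵥ x) ⬝ᵥ y := by rw [Matrix.mulVec_transpose]
      _ = (M *ᵥ x) ⬝ᵥ y := by rw [hMsym]
      _ = y ⬝ᵥ M *ᵥ x := dotProduct_comm _ _
  refine ⟨?_, hNunit, ?_⟩
  · intro α hα
    have hd : α - αstar ≠ 0 := sub_ne_zero.mpr hα
    have hpos : 0 < (α - αstar) ⬝ᵥ M *ᵥ (α - αstar) := by
      have := (Matrix.posDef_iff_dotProduct_mulVec.mp hM).2 hd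
      simpa using this
    have hexp : (α - αstar) ⬝ᵥ M *ᵥ (α - αstar)
        = α ⬝ᵥ M *ᵥ α - 2 * (α ⬝ᵥ M *ᵥ αstar) + αstar ⬝ᵥ M *ᵥ αstar := by
      rw [Matrix.mulVec_sub, dotProduct_sub, sub_dotProduct,
        sub_dotProduct, hsym αstar α]
      ring
    have hαv : α ⬝ᵥ v = α ⬝ᵥ M *ᵥ αstar := by rw [hMαstar]
    have hαsv : αstar ⬝ᵥ v = αstar ⬝ᵥ M *ᵥ αstar := by rw [hMαstar]
    show α ⬝ᵥ v - (1/2) * (α ⬝ᵥ M *ᵥ α) < αstar ⬝ᵥ v - (1/2) * (αstar ⬝ᵥ M *ᵥ αstar)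
    rw [hαv, hαsv]
    nlinarith [hpos, hexp]
  · -- αstar = (1/(1+ρ)) • N⁻¹ *ᵥ v
    have hMx : M *ᵥ ((1 / (1 + ρ)) • (N⁻¹ *ᵥ v)) = v := by
      rw [Matrix.mulVec_smul, Matrix.mulVec_mulVec, hMN, Matrix.smul_mul, hNNinv,
        Matrix.smul_mulVec, Matrix.one_mulVec, smul_smul]
      rw [one_div, inv_mul_cancel₀ hρ1.ne', one_smul]
    calc αstar = M⁻¹ *ᵥ (M *ᵥ αstar) := by
          rw [Matrix.mulVec_mulVec, hMinvM, Matrix.one_mulVec]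
      _ = M⁻¹ *ᵥ (M *ᵥ ((1 / (1 + ρ)) • (N⁻¹ *ᵥ v))) := by rw [hMαstar, hMx]
      _ = (1 / (1 + ρ)) • (N⁻¹ *ᵥ v) := by
          rw [Matrix.mulVec_mulVec, hMinvM, Matrix.one_mulVec]
end

section
/- Let G be a symmetric n×n real matrix with eigenvalues μ₁ ≥ … ≥ μₙ, λ ≥ 0, ρ := rσ² ≥ 0, and set s := 1 + ρ. If λμ₁ < √s/(√s + 1), then I − λG is invertible and the matrix M := C(I − 2λG)C + ρ·I, with C := (I − λG)⁻¹, is positive definite. -/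
open Matrix

lemma scalar_key {ρ t : ℝ} (hρ : 0 ≤ ρ)
    (ht : t < Real.sqrt (1 + ρ) / (Real.sqrt (1 + ρ) + 1)) :
    0 < 1 - t ∧ 0 < (1 - 2*t) + ρ * (1 - t)^2 := by
  set a := Real.sqrt (1 + ρ) with ha
  have ha2 : a ^ 2 = 1 + ρ := Real.sq_sqrt (by linarith)
  have ha0 : 0 ≤ a := Real.sqrt_nonneg _
  have ha1 : 1 ≤ a := by nlinarith
  have hpos : (0:ℝ) < a + 1 := by linarith
  have h1 : t * (a + 1) < a := (lt_div_iff₀ hpos).mp ht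
  have h1' : 0 < a - (a + 1) * t := by nlinarith
  have h2 : 0 < a - (a - 1) * t := by
    rcases le_or_gt t 0 with h | h
    · nlinarith
    · nlinarith
  constructor
  · nlinarith
  · nlinarith [mul_pos h1' h2]

lemma posDef_unitary_conj {n : ℕ} {U : Matrix (Fin n) (Fin n) ℝ}
    (hU : U ∈ Matrix.unitaryGroup (Fin n) ℝ) {f : Fin n → ℝ} (hf : ∀ i, 0 < f i) :
    (U * diagonal f * star U).PosDef := by
  have hU1 : U * star U = 1 := (Matrix.mem_unitaryGroup_iff).mp hU
  have hU2 : star U * U = 1 := (Matrix.mem_unitaryGroup_iff').mp hU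
  have hD : (diagonal f).PosDef := Matrix.PosDef.diagonal hf
  refine Matrix.PosDef.of_dotProduct_mulVec_pos ?_ ?_
  · show (U * diagonal f * star U)ᴴ = _
    have : (star U : Matrix (Fin n) (Fin n) ℝ) = Uᴴ := rfl
    rw [this, conjTranspose_mul, conjTranspose_mul, conjTranspose_conjTranspose,
      diagonal_conjTranspose]
    simp [Matrix.mul_assoc, star_trivial]
  · intro x hx
    have hy : (star U) *ᵥ x ≠ 0 := by
      intro h
      apply hx
      have : (U * star U) *ᵥ x = U *ᵥ ((star U) *ᵥ x) := by rw [← mulVec_mulVec]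
      rw [hU1, one_mulVec, h, mulVec_zero] at this
      exact this
    have := hD.dotProduct_mulVec_pos hy
    have key : star x ⬝ᵥ (U * diagonal f * star U) *ᵥ x
        = star ((star U) *ᵥ x) ⬝ᵥ diagonal f *ᵥ ((star U) *ᵥ x) := by
      rw [star_mulVec, mulVec_mulVec, dotProduct_mulVec, dotProduct_mulVec, vecMul_vecMul,
        show ((star U)ᴴ : Matrix (Fin n) (Fin n) ℝ) = U from star_star U, Matrix.mul_assoc]
    rw [key]
    exact this

/-- For symmetric `G` with all eigenvalues `μ` satisfying
`λμ < √s/(√s+1)` (in particular the largest one, which suffices since `λ ≥ 0`),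
`I − λG` is invertible and `M = C(I − 2λG)C + ρI` is positive definite. -/
theorem stmt_3 (n : ℕ) (G : Matrix (Fin n) (Fin n) ℝ) (lam ρ : ℝ)
    (hG : G.IsSymm) (hlam : 0 ≤ lam) (hρ : 0 ≤ ρ)
    (heig : ∀ μ ∈ spectrum ℝ G,
      lam * μ < Real.sqrt (1 + ρ) / (Real.sqrt (1 + ρ) + 1)) :
    IsUnit ((1 : Matrix (Fin n) (Fin n) ℝ) - lam • G) ∧
      (((1 : Matrix (Fin n) (Fin n) ℝ) - lam • G)⁻¹ *
          ((1 : Matrix (Fin n) (Fin n) ℝ) - (2 * lam) • G) *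
          ((1 : Matrix (Fin n) (Fin n) ℝ) - lam • G)⁻¹ +
          ρ • (1 : Matrix (Fin n) (Fin n) ℝ)).PosDef := by
  classical
  have hA : G.IsHermitian := by
    rw [Matrix.IsHermitian, conjTranspose_eq_transpose_of_trivial]; exact hG
  set d := hA.eigenvalues with hd
  set U : Matrix (Fin n) (Fin n) ℝ := (hA.eigenvectorUnitary : Matrix (Fin n) (Fin n) ℝ) with hUdef
  have hUmem : U ∈ Matrix.unitaryGroup (Fin n) ℝ := hA.eigenvectorUnitary.2
  have hU1 : U * star U = 1 := (Matrix.mem_unitaryGroup_iff).mp hUmem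
  have hU2 : star U * U = 1 := (Matrix.mem_unitaryGroup_iff').mp hUmem
  set C : (Fin n → ℝ) → Matrix (Fin n) (Fin n) ℝ :=
    fun f => U * diagonal f * star U with hCdef
  have hspec : G = C d := by
    have := hA.spectral_theorem
    simpa [hCdef] using this
  have hmul : ∀ f g, C f * C g = C (f * g) := by
    intro f g
    show U * diagonal f * star U * (U * diagonal g * star U) = U * diagonal (f * g) * star U
    calc U * diagonal f * star U * (U * diagonal g * star U)
        = U * diagonal f * (star U * U) * (diagonal g * star U) := by
          simp only [Matrix.mul_assoc]
      _ = U * diagonal (f * g) * star U := by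
          rw [hU2, Matrix.mul_one, Matrix.mul_assoc, ← Matrix.mul_assoc (diagonal f),
            diagonal_mul_diagonal, ← Matrix.mul_assoc, Pi.mul_def]
  have hone : C 1 = 1 := by
    show U * diagonal 1 * star U = 1
    rw [show (1 : Fin n → ℝ) = fun _ => (1:ℝ) from rfl, diagonal_one, Matrix.mul_one, hU1]
  have hsub : ∀ f g, C f - C g = C (f - g) := by
    intro f g
    show _ = U * diagonal (f - g) * star U
    have : diagonal (f - g) = diagonal f - diagonal g := by
      rw [diagonal_sub]; rfl
    rw [this, Matrix.mul_sub, Matrix.sub_mul]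
  have hadd : ∀ f g, C f + C g = C (f + g) := by
    intro f g
    show _ = U * diagonal (f + g) * star U
    have : diagonal (f + g) = diagonal f + diagonal g := by
      rw [diagonal_add]; rfl
    rw [this, Matrix.mul_add, Matrix.add_mul]
  have hsmulC : ∀ (c : ℝ) f, c • C f = C (c • f) := by
    intro c f
    show _ = U * diagonal (c • f) * star U
    rw [diagonal_smul, Matrix.mul_smul, Matrix.smul_mul]
  -- eigenvalue bounds
  have hkey : ∀ i, 0 < 1 - lam * d i ∧
      0 < (1 - 2 * (lam * d i)) + ρ * (1 - lam * d i) ^ 2 := by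
    intro i
    exact scalar_key hρ (heig _ (hA.eigenvalues_mem_spectrum_real i))
  have hIG : (1 : Matrix (Fin n) (Fin n) ℝ) - lam • G = C (1 - lam • d) := by
    rw [← hsub, ← hone, hspec, hsmulC]
  have hIG2 : (1 : Matrix (Fin n) (Fin n) ℝ) - (2 * lam) • G = C (1 - (2 * lam) • d) := by
    rw [← hsub, ← hone]
    conv_lhs => rw [hspec]
    rw [hsmulC]
  have hinv : ((1 : Matrix (Fin n) (Fin n) ℝ) - lam • G) * C (fun i => (1 - lam * d i)⁻¹) = 1 := by
    rw [hIG, hmul]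
    have he : ((1 - lam • d) * fun i => (1 - lam * d i)⁻¹) = 1 := by
      funext i
      simp only [Pi.mul_apply, Pi.sub_apply, Pi.one_apply, Pi.smul_apply, smul_eq_mul]
      exact mul_inv_cancel₀ (hkey i).1.ne'
    rw [he, hone]
  have hinv' : C (fun i => (1 - lam * d i)⁻¹) * ((1 : Matrix (Fin n) (Fin n) ℝ) - lam • G)
      = 1 := by
    rw [hIG, hmul]
    have he : ((fun i => (1 - lam * d i)⁻¹) * (1 - lam • d)) = 1 := by
      funext i
      simp only [Pi.mul_apply, Pi.sub_apply, Pi.one_apply, Pi.smul_apply, smul_eq_mul]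
      exact inv_mul_cancel₀ (hkey i).1.ne'
    rw [he, hone]
  refine ⟨⟨⟨_, _, hinv, hinv'⟩, rfl⟩, ?_⟩
  rw [inv_eq_right_inv hinv, hIG2, hmul, hmul]
  have hrho : ρ • (1 : Matrix (Fin n) (Fin n) ℝ) = C (fun _ => ρ) := by
    show _ = U * diagonal (fun _ => ρ) * star U
    rw [← smul_one_eq_diagonal, Matrix.mul_smul, Matrix.smul_mul, Matrix.mul_one, hU1]
  rw [hrho, hadd]
  simp only [hCdef]
  apply posDef_unitary_conj hUmem
  intro i
  simp only [Pi.add_apply, Pi.mul_apply, Pi.sub_apply, Pi.one_apply, Pi.smul_apply, smul_eq_mul]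
  obtain ⟨h1, h2⟩ := hkey i
  have hne : (1 - lam * d i) ≠ 0 := h1.ne'
  have e : (1 - lam * d i)⁻¹ * (1 - 2 * lam * d i) * (1 - lam * d i)⁻¹ + ρ
      = ((1 - 2 * (lam * d i)) + ρ * (1 - lam * d i) ^ 2) / (1 - lam * d i) ^ 2 := by
    field_simp
  rw [e]
  positivity
end

section
/- Let G be a symmetric n×n real matrix with largest eigenvalue μ₁, λ ≥ 0, ρ := rσ² > 0, and s := 1 + ρ. If λμ₁ < √s/(√s + 1), then I − λG is invertible, the matrix (λ²/s)·(GC)ᵀ(GC) with C := (I − λG)⁻¹ has spectral radius strictly less than 1, the matrix I − (λ²/s)(GC)ᵀ(GC) is invertible, and its inverse W equals the convergent series W = Σ_{k=0}^∞ (λ²/s)ᵏ ((GC)ᵀ(GC))ᵏ. -/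
open Matrix

private lemma conj_mul_conj {n : ℕ} (U A B : Matrix (Fin n) (Fin n) ℝ)
    (h : star U * U = 1) :
    (U * A * star U) * (U * B * star U) = U * (A * B) * star U := by
  simp only [mul_assoc]
  rw [← mul_assoc (star U) U (B * star U), h, one_mul]

/-- Under the spectral bound, `I − λG` is invertible, the matrix
`(λ²/s)(GC)ᵀ(GC)` has spectral radius `< 1`, `I − (λ²/s)(GC)ᵀ(GC)` is invertible,
and its inverse is the sum of the convergent geometric series. -/
theorem stmt_4 (n : ℕ) (G : Matrix (Fin n) (Fin n) ℝ) (lam ρ : ℝ)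
    (hG : G.IsSymm) (hlam : 0 ≤ lam) (hρ : 0 < ρ)
    (heig : ∀ μ ∈ spectrum ℝ G,
      lam * μ < Real.sqrt (1 + ρ) / (Real.sqrt (1 + ρ) + 1)) :
    let C := ((1 : Matrix (Fin n) (Fin n) ℝ) - lam • G)⁻¹
    IsUnit ((1 : Matrix (Fin n) (Fin n) ℝ) - lam • G) ∧
      spectralRadius ℝ ((lam ^ 2 / (1 + ρ)) • ((G * C)ᵀ * (G * C))) < 1 ∧
      IsUnit ((1 : Matrix (Fin n) (Fin n) ℝ) - (lam ^ 2 / (1 + ρ)) • ((G * C)ᵀ * (G * C))) ∧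
      HasSum (fun k : ℕ => ((lam ^ 2 / (1 + ρ)) • ((G * C)ᵀ * (G * C))) ^ k)
        (((1 : Matrix (Fin n) (Fin n) ℝ) - (lam ^ 2 / (1 + ρ)) • ((G * C)ᵀ * (G * C)))⁻¹) := by
  intro C
  classical
  have hH : G.IsHermitian := by
    rwa [Matrix.IsHermitian, conjTranspose_eq_transpose_of_trivial]
  set U : Matrix (Fin n) (Fin n) ℝ := (hH.eigenvectorUnitary : Matrix (Fin n) (Fin n) ℝ)
    with hUdef
  set μ : Fin n → ℝ := hH.eigenvalues with hμdef
  have hs1 : (1 : ℝ) < 1 + ρ := by linarith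
  have hs0 : (0 : ℝ) < 1 + ρ := by linarith
  set q : ℝ := Real.sqrt (1 + ρ) with hqdef
  have hq1 : 1 < q := by
    rw [hqdef]
    nlinarith [Real.sq_sqrt hs0.le, Real.sqrt_nonneg (1 + ρ)]
  have hqsq : q ^ 2 = 1 + ρ := Real.sq_sqrt hs0.le
  -- eigenvalue bounds
  have hμspec : ∀ i, lam * μ i < q / (q + 1) := fun i =>
    heig (μ i) (hH.eigenvalues_mem_spectrum_real i)
  set d : Fin n → ℝ := fun i => 1 - lam * μ i with hddef
  have hd0 : ∀ i, 0 < d i := by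
    intro i
    have h := hμspec i
    have : q / (q + 1) < 1 := by
      rw [div_lt_one (by linarith)]; linarith
    simp only [hddef]; linarith
  have hdne : ∀ i, d i ≠ 0 := fun i => (hd0 i).ne'
  have habs : ∀ i, |lam * μ i| < q * d i := by
    intro i
    have h := hμspec i
    have hdiv : (q / (q + 1)) * (q + 1) = q := by field_simp
    rcases le_or_gt 0 (lam * μ i) with hc | hc
    · rw [abs_of_nonneg hc]
      have : lam * μ i * (q + 1) < q := by
        calc lam * μ i * (q + 1) < (q / (q + 1)) * (q + 1) := by
              apply mul_lt_mul_of_pos_right h (by linarith)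
          _ = q := hdiv
      simp only [hddef]; nlinarith
    · rw [abs_of_neg hc]
      simp only [hddef]; nlinarith
  set t : Fin n → ℝ := fun i => (lam ^ 2 / (1 + ρ)) * (μ i * (d i)⁻¹ * (μ i * (d i)⁻¹))
    with htdef
  have ht0 : ∀ i, 0 ≤ t i := by
    intro i
    apply mul_nonneg (div_nonneg (sq_nonneg _) hs0.le)
    exact mul_self_nonneg _
  have ht1 : ∀ i, t i < 1 := by
    intro i
    have h1 : (lam * μ i) ^ 2 < (q * d i) ^ 2 := by
      have := habs i
      nlinarith [abs_nonneg (lam * μ i), sq_abs (lam * μ i)]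
    have h2 : t i = (lam * μ i) ^ 2 / ((q * d i) ^ 2) := by
      rw [htdef]
      field_simp [hdne i]
      rw [hqsq]; ring
    rw [h2, div_lt_one (pow_pos (mul_pos (by linarith) (hd0 i)) 2)]
    exact h1
  -- spectral theorem facts
  have hU2 : star U * U = 1 := by
    rw [hUdef]
    exact (Matrix.mem_unitaryGroup_iff').mp hH.eigenvectorUnitary.2
  have hU1 : U * star U = 1 := by
    rw [hUdef]
    exact (Matrix.mem_unitaryGroup_iff).mp hH.eigenvectorUnitary.2
  have hGspec : G = U * diagonal μ * star U := by
    have := hH.spectral_theorem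
    simpa using this
  -- the matrix I - lam • G
  have hA : (1 : Matrix (Fin n) (Fin n) ℝ) - lam • G = U * diagonal d * star U := by
    have hdd : diagonal d = 1 - lam • diagonal μ := by
      rw [← diagonal_one, ← diagonal_smul, ← diagonal_sub]
      congr 1
    rw [hdd, mul_sub, sub_mul, mul_one, hU1, Matrix.mul_smul, Matrix.smul_mul, ← hGspec]
  have hdetU : IsUnit U.det := by
    apply IsUnit.of_mul_eq_one (star U).det
    rw [← det_mul, hU1, det_one]
  have hdetU' : IsUnit (star U).det := by
    apply IsUnit.of_mul_eq_one U.det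
    rw [← det_mul, hU2, det_one]
  have hdiagUnit : ∀ (v : Fin n → ℝ), (∀ i, v i ≠ 0) → IsUnit (diagonal v).det := by
    intro v hv
    rw [det_diagonal]
    exact isUnit_iff_ne_zero.mpr (Finset.prod_ne_zero_iff.mpr fun i _ => hv i)
  have hconjUnit : ∀ (v : Fin n → ℝ), (∀ i, v i ≠ 0) →
      IsUnit (U * diagonal v * star U) := by
    intro v hv
    rw [Matrix.isUnit_iff_isUnit_det, det_mul, det_mul]
    exact (hdetU.mul (hdiagUnit v hv)).mul hdetU'
  have hUnitA : IsUnit ((1 : Matrix (Fin n) (Fin n) ℝ) - lam • G) := by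
    rw [hA]; exact hconjUnit d hdne
  -- the inverse C
  have hconj_inv : ∀ (v : Fin n → ℝ), (∀ i, v i ≠ 0) →
      (U * diagonal v * star U)⁻¹ = U * diagonal (fun i => (v i)⁻¹) * star U := by
    intro v hv
    apply Matrix.inv_eq_right_inv
    rw [conj_mul_conj _ _ _ hU2, diagonal_mul_diagonal]
    have : (fun i => v i * (v i)⁻¹) = fun _ => (1 : ℝ) := by
      funext i; exact mul_inv_cancel₀ (hv i)
    rw [this, diagonal_one, mul_one, hU1]
  have hC : C = U * diagonal (fun i => (d i)⁻¹) * star U := by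
    show ((1 : Matrix (Fin n) (Fin n) ℝ) - lam • G)⁻¹ = _
    rw [hA, hconj_inv d hdne]
  -- G * C
  have hGC : G * C = U * diagonal (fun i => μ i * (d i)⁻¹) * star U := by
    rw [hGspec, hC, conj_mul_conj _ _ _ hU2, diagonal_mul_diagonal]
  have htr : ∀ (v : Fin n → ℝ), (U * diagonal v * star U)ᵀ = U * diagonal v * star U := by
    intro v
    rw [star_eq_conjTranspose, conjTranspose_eq_transpose_of_trivial,
      transpose_mul, transpose_mul, transpose_transpose, diagonal_transpose, mul_assoc]
  -- the matrix M
  set M : Matrix (Fin n) (Fin n) ℝ := (lam ^ 2 / (1 + ρ)) • ((G * C)ᵀ * (G * C)) with hMdef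
  have hM : M = U * diagonal t * star U := by
    rw [hMdef, hGC, htr, conj_mul_conj _ _ _ hU2, diagonal_mul_diagonal,
      ← Matrix.smul_mul, ← Matrix.mul_smul, ← diagonal_smul]
    congr 2
  -- spectrum of M
  have hspecM : spectrum ℝ M = Set.range t := by
    rw [hM, hUdef, Unitary.spectrum_star_right_conjugate, spectrum_diagonal]
  -- spectral radius
  have hsr : spectralRadius ℝ M < 1 := by
    have hle : spectralRadius ℝ M ≤
        ((Finset.univ.sup fun i => ‖t i‖₊ : NNReal) : ENNReal) := by
      rw [spectralRadius]
      apply iSup₂_le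
      rintro k hk
      rw [hspecM] at hk
      obtain ⟨i, rfl⟩ := hk
      exact ENNReal.coe_le_coe.mpr
        (Finset.le_sup (f := fun i => ‖t i‖₊) (Finset.mem_univ i))
    apply lt_of_le_of_lt hle
    rw [show (1 : ENNReal) = ((1 : NNReal) : ENNReal) from rfl, ENNReal.coe_lt_coe]
    apply Finset.sup_lt_iff (by norm_num : (⊥ : NNReal) < 1) |>.mpr
    intro i _
    have h1 : ‖t i‖ < 1 := by
      rw [Real.norm_eq_abs, abs_of_nonneg (ht0 i)]
      exact ht1 i
    exact_mod_cast h1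
  -- I - M
  have h1t : ∀ i, (1 : ℝ) - t i ≠ 0 := fun i => by have := ht1 i; linarith
  have hIM : (1 : Matrix (Fin n) (Fin n) ℝ) - M = U * diagonal (fun i => 1 - t i) * star U := by
    have hdd : diagonal (fun i => 1 - t i) = 1 - diagonal t := by
      rw [← diagonal_one, ← diagonal_sub]
    rw [hdd, mul_sub, sub_mul, mul_one, hU1, hM]
  have hUnitIM : IsUnit ((1 : Matrix (Fin n) (Fin n) ℝ) - M) := by
    rw [hIM]; exact hconjUnit _ h1t
  -- geometric series
  have hpow : ∀ k : ℕ, M ^ k = U * diagonal (fun i => t i ^ k) * star U := by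
    intro k
    induction k with
    | zero =>
      simp only [pow_zero]
      rw [show (diagonal fun _ : Fin n => (1 : ℝ)) = (1 : Matrix (Fin n) (Fin n) ℝ) from
        diagonal_one, mul_one, hU1]
    | succ k ih =>
      rw [pow_succ, ih, hM, conj_mul_conj _ _ _ hU2, diagonal_mul_diagonal]
      simp only [pow_succ]
  have hbase : HasSum (fun k : ℕ => fun i => t i ^ k) (fun i => (1 - t i)⁻¹) :=
    Pi.hasSum.mpr fun i => hasSum_geometric_of_lt_one (ht0 i) (ht1 i)
  have hsum : HasSum (fun k : ℕ => U * diagonal (fun i => t i ^ k) * star U)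
      (U * diagonal (fun i => (1 - t i)⁻¹) * star U) :=
    (hbase.matrix_diagonal.mul_left U).mul_right (star U)
  have hinv : ((1 : Matrix (Fin n) (Fin n) ℝ) - M)⁻¹ =
      U * diagonal (fun i => (1 - t i)⁻¹) * star U := by
    rw [hIM, hconj_inv _ h1t]
  refine ⟨hUnitA, hsr, hUnitIM, ?_⟩
  rw [show (fun k : ℕ => M ^ k) = fun k : ℕ => U * diagonal (fun i => t i ^ k) * star U from
    funext hpow, hinv]
  exact hsum
end

section
/- Let G be a symmetric n×n real matrix and λ a real number such that I − λG and I − 2λG are both invertible, and set C := (I − λG)⁻¹. If M := C(I − 2λG)C is invertible then the risk-free optimal incentive vector α* = M⁻¹C1 satisfies α* = ½(1 + (I − 2λG)⁻¹1); equivalently, αᵢ* = ½(1 + Bᵢ(2λ)) where Bᵢ(2λ) is worker i's Bonacich centrality with parameter 2λ. -/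
open Matrix

/-- With no risk the optimal incentives are
`α* = [C(I − 2λG)C]⁻¹C1 = ½(1 + (I − 2λG)⁻¹1)`, i.e. an affine transformation
of Bonacich centrality with parameter `2λ`. -/
theorem stmt_6 (n : ℕ) (G : Matrix (Fin n) (Fin n) ℝ) (lam : ℝ)
    (hG : G.IsSymm)
    (hinv : IsUnit ((1 : Matrix (Fin n) (Fin n) ℝ) - lam • G))
    (hinv2 : IsUnit ((1 : Matrix (Fin n) (Fin n) ℝ) - (2 * lam) • G)) :
    let C := ((1 : Matrix (Fin n) (Fin n) ℝ) - lam • G)⁻¹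
    let M := C * ((1 : Matrix (Fin n) (Fin n) ℝ) - (2 * lam) • G) * C
    let one : Fin n → ℝ := fun _ => 1
    IsUnit M →
    M⁻¹.mulVec (C.mulVec one) =
      fun i => (1 / 2) * (1 + ((1 : Matrix (Fin n) (Fin n) ℝ) -
        (2 * lam) • G)⁻¹.mulVec one i) := by
  intro C M one _
  set A := (1 : Matrix (Fin n) (Fin n) ℝ) - lam • G with hA
  set B := (1 : Matrix (Fin n) (Fin n) ℝ) - (2 * lam) • G with hB
  have hAd : IsUnit A.det := (Matrix.isUnit_iff_isUnit_det A).mp hinv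
  have hBd : IsUnit B.det := (Matrix.isUnit_iff_isUnit_det B).mp hinv2
  have hCinv : C⁻¹ = A := Matrix.nonsing_inv_nonsing_inv A hAd
  have hMinv : M⁻¹ = A * B⁻¹ * A := by
    show (C * B * C)⁻¹ = A * B⁻¹ * A
    rw [Matrix.mul_inv_rev, Matrix.mul_inv_rev, hCinv, mul_assoc]
  have hMA : M⁻¹ * C = A * B⁻¹ := by
    rw [hMinv, mul_assoc]
    have : A * C = 1 := Matrix.mul_nonsing_inv A hAd
    rw [this, mul_one]
  have hkey : M⁻¹.mulVec (C.mulVec one) = (A * B⁻¹).mulVec one := by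
    rw [Matrix.mulVec_mulVec, hMA]
  have hAhalf : A * B⁻¹ = (1/2 : ℝ) • (1 + B⁻¹) := by
    have h2 : A = (1/2 : ℝ) • (B + 1) := by
      rw [hA, hB]
      module
    rw [h2, smul_mul_assoc, add_mul, one_mul,
      Matrix.mul_nonsing_inv B hBd]
  rw [hkey, hAhalf]
  funext i
  simp [Matrix.smul_mulVec, Matrix.add_mulVec, Matrix.one_mulVec, one]
  ring
end

section
/- Let G be an n×n real matrix and λ a real number with I − λG invertible, C := (I − λG)⁻¹, and suppose that for all sufficiently large ρ > 0 the matrix (1+ρ)I − λ²(GC)ᵀ(GC) is invertible (which holds for ρ large). Define α*(ρ) := [(1+ρ)I − λ²(GC)ᵀ(GC)]⁻¹Cᵀ1. Then lim_{ρ→∞} (1+ρ)·α*(ρ) = Cᵀ1; in particular α*(ρ) → 0 and the direction of α*(ρ) converges to that of the Bonacich-centrality vector Cᵀ1. -/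
open Matrix Filter

/-- As `ρ → ∞`, `(1+ρ)·α*(ρ) → Cᵀ1`; in particular `α*(ρ) → 0`
and incentives become proportional to Bonacich centrality. -/
theorem stmt_7 (n : ℕ) (G : Matrix (Fin n) (Fin n) ℝ) (lam : ℝ)
    (hinv : IsUnit ((1 : Matrix (Fin n) (Fin n) ℝ) - lam • G))
    (hlarge : ∀ᶠ ρ : ℝ in atTop,
      IsUnit ((1 + ρ) • (1 : Matrix (Fin n) (Fin n) ℝ) -
        (lam ^ 2) • ((G * ((1 : Matrix (Fin n) (Fin n) ℝ) - lam • G)⁻¹)ᵀ *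
          (G * ((1 : Matrix (Fin n) (Fin n) ℝ) - lam • G)⁻¹)))) :
    let C := ((1 : Matrix (Fin n) (Fin n) ℝ) - lam • G)⁻¹
    let one : Fin n → ℝ := fun _ => 1
    let αstar : ℝ → (Fin n → ℝ) := fun ρ =>
      ((1 + ρ) • (1 : Matrix (Fin n) (Fin n) ℝ) -
        (lam ^ 2) • ((G * C)ᵀ * (G * C)))⁻¹.mulVec (Cᵀ.mulVec one)
    Tendsto (fun ρ => (1 + ρ) • αstar ρ) atTop (nhds (Cᵀ.mulVec one)) ∧
      Tendsto αstar atTop (nhds 0) := by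
  intro C one αstar
  set M : Matrix (Fin n) (Fin n) ℝ := (lam ^ 2) • ((G * C)ᵀ * (G * C)) with hM
  set b : Fin n → ℝ := Cᵀ.mulVec one with hb
  -- key: eventually, (1+ρ) • αstar ρ = ((1 : M) - (1+ρ)⁻¹ • M)⁻¹.mulVec b
  have hev : ∀ᶠ ρ : ℝ in atTop,
      (1 + ρ) • αstar ρ =
        ((1 : Matrix (Fin n) (Fin n) ℝ) - (1 + ρ)⁻¹ • M)⁻¹.mulVec b := by
    filter_upwards [hlarge, eventually_gt_atTop (0 : ℝ)] with ρ hU hρ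
    have hne : (1 + ρ) ≠ 0 := by positivity
    have hkey : (1 : Matrix (Fin n) (Fin n) ℝ) - (1 + ρ)⁻¹ • M =
        (1 + ρ)⁻¹ • ((1 + ρ) • (1 : Matrix (Fin n) (Fin n) ℝ) - M) := by
      rw [smul_sub, smul_smul ((1 + ρ)⁻¹) (1 + ρ) (1 : Matrix (Fin n) (Fin n) ℝ),
        inv_mul_cancel₀ hne, one_smul]
    have hUdet : IsUnit ((1 + ρ) • (1 : Matrix (Fin n) (Fin n) ℝ) - M).det :=
      (Matrix.isUnit_iff_isUnit_det _).mp hU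
    have hinvsmul : ((1 : Matrix (Fin n) (Fin n) ℝ) - (1 + ρ)⁻¹ • M)⁻¹ =
        (1 + ρ) • ((1 + ρ) • (1 : Matrix (Fin n) (Fin n) ℝ) - M)⁻¹ := by
      rw [hkey]
      have hI : Invertible ((1 + ρ)⁻¹ : ℝ) := invertibleOfNonzero (inv_ne_zero hne)
      rw [Matrix.inv_smul (A := (1 + ρ) • (1 : Matrix (Fin n) (Fin n) ℝ) - M)
        ((1 + ρ)⁻¹) hUdet]
      congr 1
      rw [invOf_eq_inv, inv_inv]
    show (1 + ρ) •
        (((1 + ρ) • (1 : Matrix (Fin n) (Fin n) ℝ) - M)⁻¹.mulVec b) = _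
    rw [hinvsmul, Matrix.smul_mulVec]
  have htends : Tendsto (fun ρ : ℝ =>
      ((1 : Matrix (Fin n) (Fin n) ℝ) - (1 + ρ)⁻¹ • M)) atTop
      (nhds (1 : Matrix (Fin n) (Fin n) ℝ)) := by
    have h0 : Tendsto (fun ρ : ℝ => (1 + ρ)⁻¹) atTop (nhds 0) := by
      apply tendsto_inv_atTop_zero.comp
      exact tendsto_atTop_add_const_left atTop 1 tendsto_id
    have hMc : Tendsto (fun _ : ℝ => M) atTop (nhds M) := tendsto_const_nhds
    have h1' := h0.smul hMc
    have := (tendsto_const_nhds (x := (1 : Matrix (Fin n) (Fin n) ℝ))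
        (f := atTop (α := ℝ))).sub h1'
    simpa using this
  have hcont : ContinuousAt (fun A : Matrix (Fin n) (Fin n) ℝ => A⁻¹)
      (1 : Matrix (Fin n) (Fin n) ℝ) := by
    apply continuousAt_matrix_inv
    have hre : (Ring.inverse : ℝ → ℝ) = fun x => x⁻¹ := by
      funext x; exact Ring.inverse_eq_inv x
    rw [hre]
    have : ((1 : Matrix (Fin n) (Fin n) ℝ).det) = 1 := Matrix.det_one
    rw [this]
    exact (continuousAt_inv₀ one_ne_zero)
  have h1 : Tendsto (fun ρ : ℝ =>
      ((1 : Matrix (Fin n) (Fin n) ℝ) - (1 + ρ)⁻¹ • M)⁻¹) atTop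
      (nhds ((1 : Matrix (Fin n) (Fin n) ℝ)⁻¹)) := hcont.tendsto.comp htends
  rw [inv_one] at h1
  have h2 : Tendsto (fun ρ : ℝ =>
      ((1 : Matrix (Fin n) (Fin n) ℝ) - (1 + ρ)⁻¹ • M)⁻¹.mulVec b) atTop
      (nhds ((1 : Matrix (Fin n) (Fin n) ℝ).mulVec b)) := by
    have hcmv : Continuous (fun A : Matrix (Fin n) (Fin n) ℝ => A.mulVec b) :=
      continuous_id.matrix_mulVec continuous_const
    exact (hcmv.tendsto _).comp h1
  rw [Matrix.one_mulVec] at h2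
  have hmain : Tendsto (fun ρ => (1 + ρ) • αstar ρ) atTop (nhds b) :=
    Tendsto.congr' (hev.mono fun ρ h => h.symm) h2
  refine ⟨hmain, ?_⟩
  have h0 : Tendsto (fun ρ : ℝ => (1 + ρ)⁻¹) atTop (nhds 0) := by
    apply tendsto_inv_atTop_zero.comp
    exact tendsto_atTop_add_const_left atTop 1 tendsto_id
  have h3 : Tendsto (fun ρ : ℝ => (1 + ρ)⁻¹ • ((1 + ρ) • αstar ρ)) atTop
      (nhds ((0 : ℝ) • b)) := h0.smul hmain
  rw [zero_smul] at h3
  apply h3.congr'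
  filter_upwards [eventually_gt_atTop (0 : ℝ)] with ρ hρ
  have hne : (1 + ρ) ≠ 0 := by positivity
  rw [smul_smul, inv_mul_cancel₀ hne, one_smul]
end

section
/- Let G be an n×n real matrix, λ a real number with I − λG invertible, C := (I − λG)⁻¹, ρ := rσ² ≥ 0, M := Cᵀ(I − λ(G+Gᵀ))C + ρI, and suppose M is invertible with α* := M⁻¹Cᵀ1. Then the maximized expected profit satisfies π(α*) = α*ᵀCᵀ1 − ½ α*ᵀMα* = ½·1ᵀCα* = ½·1ᵀe*; that is, at the optimal contract the firm's expected profit equals one-half of expected equilibrium output, for any network G, any peer-effect strength λ, and any risk level rσ². -/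
open Matrix

/-- At the optimum `α* = M⁻¹Cᵀ1`, the firm's expected profit
`π(α*) = α*ᵀCᵀ1 − ½α*ᵀMα*` equals one-half of expected equilibrium output
`½·1ᵀCα* = ½·1ᵀe*`, for any network, peer-effect strength, and risk level. -/
theorem stmt_10 (n : ℕ) (G : Matrix (Fin n) (Fin n) ℝ) (lam ρ : ℝ) (hρ : 0 ≤ ρ)
    (hinv : IsUnit ((1 : Matrix (Fin n) (Fin n) ℝ) - lam • G))
    (hM : IsUnit (((1 : Matrix (Fin n) (Fin n) ℝ) - lam • G)⁻¹ᵀ *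
      ((1 : Matrix (Fin n) (Fin n) ℝ) - lam • (G + Gᵀ)) *
      ((1 : Matrix (Fin n) (Fin n) ℝ) - lam • G)⁻¹ +
      ρ • (1 : Matrix (Fin n) (Fin n) ℝ))) :
    let C := ((1 : Matrix (Fin n) (Fin n) ℝ) - lam • G)⁻¹
    let M := Cᵀ * ((1 : Matrix (Fin n) (Fin n) ℝ) - lam • (G + Gᵀ)) * C +
      ρ • (1 : Matrix (Fin n) (Fin n) ℝ)
    let one : Fin n → ℝ := fun _ => 1
    let αstar := M⁻¹.mulVec (Cᵀ.mulVec one)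
    αstar ⬝ᵥ Cᵀ.mulVec one - (1 / 2) * (αstar ⬝ᵥ M.mulVec αstar) =
      (1 / 2) * (one ⬝ᵥ C.mulVec αstar) := by
  intro C M one αstar
  have hMinv : M * M⁻¹ = 1 := Matrix.mul_nonsing_inv M ((Matrix.isUnit_iff_isUnit_det M).mp hM)
  have h1 : M.mulVec αstar = Cᵀ.mulVec one := by
    show M.mulVec (M⁻¹.mulVec _) = _
    rw [Matrix.mulVec_mulVec, hMinv, Matrix.one_mulVec]
  have h2 : one ⬝ᵥ C.mulVec αstar = αstar ⬝ᵥ Cᵀ.mulVec one := by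
    rw [Matrix.dotProduct_mulVec, Matrix.mulVec_transpose, dotProduct_comm]
  rw [h1, h2]
  ring
end

section
/- Let G be a symmetric n×n real matrix with an orthonormal eigenbasis u₁,…,uₙ of ℝⁿ and corresponding eigenvalues μ₁,…,μₙ (G uₗ = μₗ uₗ). Let λ be real, ρ := rσ² ≥ 0, and suppose (1+ρ)(1 − λμₗ)² − (λμₗ)² > 0 for every ℓ. Then I − λG is invertible, M := C(I − 2λG)C + ρI is invertible (C := (I − λG)⁻¹), and the maximized expected profit satisfies ½·1ᵀe* = ½ Σ_{ℓ=1}^{n} ⟨uₗ, 1⟩² / [(1+ρ)(1 − λμₗ)² − (λμₗ)²], where e* := C M⁻¹ C 1. -/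
open Matrix BigOperators Finset


lemma conj_mul' {n : ℕ} (Q : Matrix (Fin n) (Fin n) ℝ) (h : Qᵀ * Q = 1)
    (f g : Fin n → ℝ) :
    (Q * diagonal f * Qᵀ) * (Q * diagonal g * Qᵀ) = Q * diagonal (f * g) * Qᵀ := by
  calc (Q * diagonal f * Qᵀ) * (Q * diagonal g * Qᵀ)
      = Q * (diagonal f * ((Qᵀ * Q) * (diagonal g * Qᵀ))) := by
        simp only [Matrix.mul_assoc]
    _ = Q * diagonal (f * g) * Qᵀ := by
        rw [h, Matrix.one_mul]
        simp only [← Matrix.mul_assoc, diagonal_mul_diagonal]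
        rfl

lemma conj_inv' {n : ℕ} (Q : Matrix (Fin n) (Fin n) ℝ) (hQ : Q * Qᵀ = 1)
    (hQ' : Qᵀ * Q = 1) (f : Fin n → ℝ) (hf : ∀ l, f l ≠ 0) :
    (Q * diagonal f * Qᵀ) * (Q * diagonal f⁻¹ * Qᵀ) = 1 := by
  rw [conj_mul' Q hQ']
  have : f * f⁻¹ = 1 := funext fun l => mul_inv_cancel₀ (hf l)
  rw [this, show (diagonal 1 : Matrix (Fin n) (Fin n) ℝ) = 1 from diagonal_one,
    Matrix.mul_one, hQ]

lemma conj_sub' {n : ℕ} (Q : Matrix (Fin n) (Fin n) ℝ) (f g : Fin n → ℝ) :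
    Q * diagonal f * Qᵀ - Q * diagonal g * Qᵀ = Q * diagonal (f - g) * Qᵀ := by
  rw [show f - g = fun i => f i - g i from rfl, ← diagonal_sub, Matrix.mul_sub, Matrix.sub_mul]

lemma conj_add' {n : ℕ} (Q : Matrix (Fin n) (Fin n) ℝ) (f g : Fin n → ℝ) :
    Q * diagonal f * Qᵀ + Q * diagonal g * Qᵀ = Q * diagonal (f + g) * Qᵀ := by
  rw [show f + g = fun i => f i + g i from rfl, ← diagonal_add, Matrix.mul_add, Matrix.add_mul]

lemma conj_smul' {n : ℕ} (Q : Matrix (Fin n) (Fin n) ℝ) (c : ℝ) (f : Fin n → ℝ) :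
    c • (Q * diagonal f * Qᵀ) = Q * diagonal (c • f) * Qᵀ := by
  rw [diagonal_smul, Matrix.mul_smul, Matrix.smul_mul]

/-- Spectral decomposition of equilibrium profits: if `G` has an
orthonormal eigenbasis `u₁,…,uₙ` with eigenvalues `μₗ` and
`(1+ρ)(1 − λμₗ)² − (λμₗ)² > 0` for every `ℓ`, then `I − λG` and
`M = C(I − 2λG)C + ρI` are invertible and
`½·1ᵀe* = ½ Σₗ ⟨uₗ,1⟩² / [(1+ρ)(1 − λμₗ)² − (λμₗ)²]` where `e* = CM⁻¹C1`. -/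
theorem stmt_12 (n : ℕ) (G : Matrix (Fin n) (Fin n) ℝ) (lam ρ : ℝ)
    (hG : G.IsSymm) (hρ : 0 ≤ ρ)
    (u : Fin n → (Fin n → ℝ)) (μ : Fin n → ℝ)
    (hortho : ∀ l l' : Fin n, u l ⬝ᵥ u l' = if l = l' then 1 else 0)
    (heig : ∀ l : Fin n, G.mulVec (u l) = μ l • u l)
    (hpos : ∀ l : Fin n, 0 < (1 + ρ) * (1 - lam * μ l) ^ 2 - (lam * μ l) ^ 2) :
    let one : Fin n → ℝ := fun _ => 1
    let C := ((1 : Matrix (Fin n) (Fin n) ℝ) - lam • G)⁻¹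
    let M := C * ((1 : Matrix (Fin n) (Fin n) ℝ) - (2 * lam) • G) * C +
      ρ • (1 : Matrix (Fin n) (Fin n) ℝ)
    let estar := C.mulVec (M⁻¹.mulVec (C.mulVec one))
    IsUnit ((1 : Matrix (Fin n) (Fin n) ℝ) - lam • G) ∧
    IsUnit M ∧
    (1 / 2) * (one ⬝ᵥ estar) =
      (1 / 2) * ∑ l : Fin n,
        (u l ⬝ᵥ one) ^ 2 / ((1 + ρ) * (1 - lam * μ l) ^ 2 - (lam * μ l) ^ 2) := by
  intro one C M estar
  set Q : Matrix (Fin n) (Fin n) ℝ := Matrix.of (fun i l => u l i) with hQdef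
  -- orthogonality
  have hQtQ : Qᵀ * Q = 1 := by
    ext l l'
    have := hortho l l'
    simpa [Matrix.mul_apply, Matrix.one_apply, dotProduct, hQdef,
      Matrix.transpose_apply] using this
  have hQQt : Q * Qᵀ = 1 := mul_eq_one_comm.mp hQtQ
  -- eigen decomposition of G
  have hGQ : G * Q = Q * diagonal μ := by
    ext i l
    rw [Matrix.mul_apply, Matrix.mul_diagonal]
    have h := congrFun (heig l) i
    simp only [Matrix.mulVec, dotProduct, Pi.smul_apply, smul_eq_mul] at h
    simp only [hQdef, Matrix.of_apply]
    rw [h, mul_comm]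
  have hGconj : G = Q * diagonal μ * Qᵀ := by
    calc G = G * (Q * Qᵀ) := by rw [hQQt, Matrix.mul_one]
      _ = (G * Q) * Qᵀ := by rw [Matrix.mul_assoc]
      _ = Q * diagonal μ * Qᵀ := by rw [hGQ]
  have honec : (1 : Matrix (Fin n) (Fin n) ℝ) = Q * diagonal (fun _ => 1) * Qᵀ := by
    rw [show (diagonal (fun _ => 1) : Matrix (Fin n) (Fin n) ℝ) = 1 from diagonal_one,
      Matrix.mul_one, hQQt]
  -- scalar functions
  set a : Fin n → ℝ := fun l => 1 - lam * μ l with hadef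
  set d : Fin n → ℝ := fun l => (1 + ρ) * (1 - lam * μ l) ^ 2 - (lam * μ l) ^ 2 with hddef
  have hd : ∀ l, d l ≠ 0 := fun l => ne_of_gt (hpos l)
  have ha : ∀ l, a l ≠ 0 := by
    intro l h
    have h2 : (1 - lam * μ l) = 0 := h
    have := hpos l
    rw [h2] at this
    nlinarith [sq_nonneg (lam * μ l)]
  -- A = I - lam G
  have hA : (1 : Matrix (Fin n) (Fin n) ℝ) - lam • G = Q * diagonal a * Qᵀ := by
    rw [hGconj, conj_smul', honec, conj_sub']
    congr 1
  have hAinv : ((1 : Matrix (Fin n) (Fin n) ℝ) - lam • G) *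
      (Q * diagonal a⁻¹ * Qᵀ) = 1 := by
    rw [hA]; exact conj_inv' Q hQQt hQtQ a ha
  have hAinv' : (Q * diagonal a⁻¹ * Qᵀ) *
      ((1 : Matrix (Fin n) (Fin n) ℝ) - lam • G) = 1 :=
    mul_eq_one_comm.mp hAinv
  have hAunit : IsUnit ((1 : Matrix (Fin n) (Fin n) ℝ) - lam • G) :=
    ⟨⟨_, _, hAinv, hAinv'⟩, rfl⟩
  have hC : C = Q * diagonal a⁻¹ * Qᵀ := Matrix.inv_eq_right_inv hAinv
  -- B = I - 2 lam G
  set b : Fin n → ℝ := fun l => 1 - 2 * lam * μ l with hbdef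
  have hB : (1 : Matrix (Fin n) (Fin n) ℝ) - (2 * lam) • G = Q * diagonal b * Qᵀ := by
    rw [hGconj, conj_smul', honec, conj_sub']
    congr 1
  -- M
  set m : Fin n → ℝ := a⁻¹ * b * a⁻¹ + ρ • (fun _ => (1:ℝ)) with hmdef
  have hM : M = Q * diagonal m * Qᵀ := by
    show C * ((1 : Matrix (Fin n) (Fin n) ℝ) - (2 * lam) • G) * C +
      ρ • (1 : Matrix (Fin n) (Fin n) ℝ) = _
    rw [hC, hB, conj_mul' Q hQtQ, conj_mul' Q hQtQ, honec, conj_smul', conj_add']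
  have hmeq : ∀ l, m l = d l / (a l) ^ 2 := by
    intro l
    have hal := ha l
    simp only [hmdef, Pi.add_apply, Pi.mul_apply, Pi.inv_apply, Pi.smul_apply,
      smul_eq_mul, hadef, hbdef, hddef]
    have hal' : 1 - lam * μ l ≠ 0 := hal
    field_simp
    ring
  have hm : ∀ l, m l ≠ 0 := by
    intro l
    rw [hmeq l]
    exact div_ne_zero (hd l) (pow_ne_zero 2 (ha l))
  have hMinv1 : (Q * diagonal m * Qᵀ) * (Q * diagonal m⁻¹ * Qᵀ) = 1 :=
    conj_inv' Q hQQt hQtQ m hm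
  have hMunit : IsUnit M := by
    rw [hM]
    exact ⟨⟨_, _, hMinv1, mul_eq_one_comm.mp hMinv1⟩, rfl⟩
  have hMinv : M⁻¹ = Q * diagonal m⁻¹ * Qᵀ := by
    rw [hM]; exact Matrix.inv_eq_right_inv hMinv1
  -- estar
  set g : Fin n → ℝ := a⁻¹ * m⁻¹ * a⁻¹ with hgdef
  have hestar : estar = (Q * diagonal g * Qᵀ).mulVec one := by
    show C.mulVec (M⁻¹.mulVec (C.mulVec one)) = _
    rw [Matrix.mulVec_mulVec, Matrix.mulVec_mulVec, hC, hMinv,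
      conj_mul' Q hQtQ, conj_mul' Q hQtQ]
  refine ⟨hAunit, hMunit, ?_⟩
  -- compute the dot product
  set v : Fin n → ℝ := Qᵀ.mulVec one with hvdef
  have hv : ∀ l, v l = u l ⬝ᵥ one := by
    intro l
    simp [hvdef, Matrix.mulVec, dotProduct, hQdef]
  have hdot : one ⬝ᵥ estar = ∑ l : Fin n, g l * (v l) ^ 2 := by
    rw [hestar]
    rw [show (Q * diagonal g * Qᵀ).mulVec one
        = Q.mulVec ((diagonal g).mulVec (Qᵀ.mulVec one)) by
      rw [Matrix.mulVec_mulVec, Matrix.mulVec_mulVec]]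
    rw [Matrix.dotProduct_mulVec]
    have hvm : Matrix.vecMul one Q = v := by
      rw [hvdef, ← Matrix.mulVec_transpose]
    rw [hvm]
    simp only [dotProduct, Matrix.mulVec_diagonal]
    exact Finset.sum_congr rfl fun l _ => by ring
  rw [hdot]
  congr 1
  refine Finset.sum_congr rfl fun l _ => ?_
  rw [← hv l]
  have hal := ha l
  have hdl := hd l
  have : g l = 1 / d l := by
    simp only [hgdef, Pi.mul_apply, Pi.inv_apply]
    rw [hmeq l]
    field_simp
  rw [this, hddef]
  field_simp
end

section
/- Let G be a symmetric n×n real matrix with constant row sums d (i.e., G1 = d·1), let λ be real, ρ := rσ² ≥ 0, and set D := 1 − 2λd + ρ(1 − λd)². Assume D ≠ 0 and that the matrix I − 2λG + ρ(I − λG)² is invertible. Then the unique solution of (I − 2λG + ρ(I − λG)²)e* = 1 is e* = (1/D)·1, and the firm's maximized expected profit equals ½·1ᵀe* = n/(2D). In particular, all d-regular graphs on n nodes generate the same expected profit, regardless of their component structure. -/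
open Matrix

/-- For a symmetric `G` with constant row sums `d` (a `d`-regular
network), the unique solution of `(I − 2λG + ρ(I − λG)²)e* = 1` is
`e* = (1/D)·1` with `D = 1 − 2λd + ρ(1 − λd)²`, and the maximized expected profit
equals `½·1ᵀe* = n/(2D)`: all `d`-regular graphs yield the same profit. -/
theorem stmt_13 (n : ℕ) (G : Matrix (Fin n) (Fin n) ℝ) (lam ρ d : ℝ)
    (hG : G.IsSymm) (hρ : 0 ≤ ρ)
    (hreg : G.mulVec (fun _ => 1) = fun _ => d)
    (hD : 1 - 2 * lam * d + ρ * (1 - lam * d) ^ 2 ≠ 0)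
    (hinv : IsUnit ((1 : Matrix (Fin n) (Fin n) ℝ) - (2 * lam) • G +
      ρ • ((1 : Matrix (Fin n) (Fin n) ℝ) - lam • G) ^ 2)) :
    let one : Fin n → ℝ := fun _ => 1
    let D : ℝ := 1 - 2 * lam * d + ρ * (1 - lam * d) ^ 2
    let estar : Fin n → ℝ := (1 / D) • one
    (((1 : Matrix (Fin n) (Fin n) ℝ) - (2 * lam) • G +
        ρ • ((1 : Matrix (Fin n) (Fin n) ℝ) - lam • G) ^ 2).mulVec estar = one) ∧
    (∀ e : Fin n → ℝ,
      ((1 : Matrix (Fin n) (Fin n) ℝ) - (2 * lam) • G +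
        ρ • ((1 : Matrix (Fin n) (Fin n) ℝ) - lam • G) ^ 2).mulVec e = one → e = estar) ∧
    (1 / 2) * (one ⬝ᵥ estar) = n / (2 * D) := by
  intro one D estar
  set M := (1 : Matrix (Fin n) (Fin n) ℝ) - (2 * lam) • G +
      ρ • ((1 : Matrix (Fin n) (Fin n) ℝ) - lam • G) ^ 2 with hM
  have hone : one = (fun _ => 1 : Fin n → ℝ) := rfl
  have hGone : G.mulVec one = d • one := by
    funext i
    have := congrFun hreg i
    simpa [one] using this
  have hA : ((1 : Matrix (Fin n) (Fin n) ℝ) - lam • G).mulVec one = (1 - lam * d) • one := by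
    rw [sub_mulVec, smul_mulVec, hGone, one_mulVec, smul_smul, sub_smul, one_smul]
  have h2 : ((((1 : Matrix (Fin n) (Fin n) ℝ) - lam • G)) ^ 2).mulVec one
      = ((1 - lam * d) ^ 2) • one := by
    rw [sq, ← mulVec_mulVec, hA, mulVec_smul, hA, smul_smul, sq]
  have hMone : M.mulVec one = D • one := by
    rw [hM, add_mulVec, sub_mulVec, smul_mulVec, smul_mulVec, one_mulVec,
      hGone, h2]
    funext i
    simp [one, D]
  have hMest : M.mulVec estar = one := by
    show M.mulVec ((1 / D) • one) = one
    rw [mulVec_smul, hMone, smul_smul]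
    field_simp
    rw [div_self (show D ≠ 0 from hD), one_smul]
  refine ⟨hMest, ?_, ?_⟩
  · intro e he
    have hdet : IsUnit M.det := (Matrix.isUnit_iff_isUnit_det M).mp hinv
    have hMM : M⁻¹ * M = 1 := Matrix.nonsing_inv_mul M hdet
    have h1 : M⁻¹.mulVec (M.mulVec e) = e := by
      rw [mulVec_mulVec, hMM, one_mulVec]
    have h2' : M⁻¹.mulVec (M.mulVec estar) = estar := by
      rw [mulVec_mulVec, hMM, one_mulVec]
    rw [← h1, he, ← hMest, h2']
  · have : one ⬝ᵥ estar = n / D := by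
      simp [dotProduct, one, estar, Finset.sum_const]
      ring
    have hD' : D ≠ 0 := hD
    rw [this]
    field_simp
end

section
/- Let m, n ≥ 1, N := m + n, and let G be the N×N adjacency matrix of the complete bipartite graph K_{m,n} (G_{ij} = 1 if i and j lie in different blocks, 0 otherwise). Let λ ≥ 0, ρ := rσ² ≥ 0, and assume (1+ρ)(1 − λ√(mn))² − λ²mn > 0 and (1+ρ)(1 + λ√(mn))² − λ²mn > 0. Then the firm's maximized expected profit equals ½·1ᵀe* = ½·[ (√(m/2) + √(n/2))² / ((1+ρ)(1 − λ√(mn))² − λ²mn) + (√(m/2) − √(n/2))² / ((1+ρ)(1 + λ√(mn))² − λ²mn) ]. -/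
open Matrix

private lemma stmt14_aux (m n μ A B : ℝ) (hμ2 : μ^2 = m*n)
    (h1 : A - B*μ ≠ 0) (h2 : A + B*μ ≠ 0) :
    (1/2)*(m*((A+B*n)/((A-B*μ)*(A+B*μ))) + n*((A+B*m)/((A-B*μ)*(A+B*μ)))) =
    (1/2)*(((m+n)/2+μ)/(A-B*μ) + ((m+n)/2-μ)/(A+B*μ)) := by
  field_simp
  ring_nf
  linear_combination (-4*B) * hμ2

/-- For the complete bipartite peer network `K_{m,n}` (blocks of
sizes `m` and `n`, `N = m + n`), the maximized expected profit `½·1ᵀe*`, where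
`e*` solves `(I − 2λG + ρ(I − λG)²)e* = 1`, equals the stated two-term spectral
formula involving the eigenvalues `±√(mn)`. -/
theorem stmt_14 (m n : ℕ) (hm : 1 ≤ m) (hn : 1 ≤ n) (lam ρ : ℝ)
    (hlam : 0 ≤ lam) (hρ : 0 ≤ ρ)
    (G : Matrix (Fin (m + n)) (Fin (m + n)) ℝ)
    (hGdef : ∀ i j : Fin (m + n),
      G i j = if (((i : ℕ) < m) ↔ ((j : ℕ) < m)) then 0 else 1)
    (hden1 : 0 < (1 + ρ) * (1 - lam * Real.sqrt (m * n)) ^ 2 - lam ^ 2 * (m * n))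
    (hden2 : 0 < (1 + ρ) * (1 + lam * Real.sqrt (m * n)) ^ 2 - lam ^ 2 * (m * n))
    (estar : Fin (m + n) → ℝ)
    (hestar : ((1 : Matrix (Fin (m + n)) (Fin (m + n)) ℝ) - (2 * lam) • G +
      ρ • ((1 : Matrix (Fin (m + n)) (Fin (m + n)) ℝ) - lam • G) ^ 2).mulVec estar =
      fun _ => 1) :
    (1 / 2) * ((fun _ : Fin (m + n) => (1 : ℝ)) ⬝ᵥ estar) =
      (1 / 2) * ((Real.sqrt (m / 2) + Real.sqrt (n / 2)) ^ 2 /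
          ((1 + ρ) * (1 - lam * Real.sqrt (m * n)) ^ 2 - lam ^ 2 * (m * n)) +
        (Real.sqrt (m / 2) - Real.sqrt (n / 2)) ^ 2 /
          ((1 + ρ) * (1 + lam * Real.sqrt (m * n)) ^ 2 - lam ^ 2 * (m * n))) := by
  set M : Matrix (Fin (m + n)) (Fin (m + n)) ℝ :=
    (1 : Matrix (Fin (m + n)) (Fin (m + n)) ℝ) - (2 * lam) • G +
      ρ • ((1 : Matrix (Fin (m + n)) (Fin (m + n)) ℝ) - lam • G) ^ 2 with hM
  set μ : ℝ := Real.sqrt (m * n) with hμdef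
  have hmn0 : (0:ℝ) ≤ (m:ℝ) * n := by positivity
  have hμ2 : μ ^ 2 = (m:ℝ) * n := Real.sq_sqrt hmn0
  set A : ℝ := 1 + ρ * (1 + lam ^ 2 * ((m:ℝ) * n)) with hA
  set B : ℝ := 2 * lam * (1 + ρ) with hB
  have hd1 : (1 + ρ) * (1 - lam * μ) ^ 2 - lam ^ 2 * ((m:ℝ) * n) = A - B * μ := by
    rw [hA, hB]; linear_combination (1+ρ)*lam^2*hμ2
  have hd2 : (1 + ρ) * (1 + lam * μ) ^ 2 - lam ^ 2 * ((m:ℝ) * n) = A + B * μ := by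
    rw [hA, hB]; linear_combination (1+ρ)*lam^2*hμ2
  have hd1pos : 0 < A - B * μ := hd1 ▸ hden1
  have hd2pos : 0 < A + B * μ := hd2 ▸ hden2
  set D : ℝ := (A - B * μ) * (A + B * μ) with hD
  have hDpos : 0 < D := mul_pos hd1pos hd2pos
  have hDne : D ≠ 0 := ne_of_gt hDpos
  set a : ℝ := (A + B * n) / D with ha
  set b : ℝ := (A + B * m) / D with hb
  have hsum : ∀ x y : ℝ, ∑ j : Fin (m+n), (if (j:ℕ) < m then x else y) = m*x + n*y := by
    intro x y
    rw [← Equiv.sum_comp (finSumFinEquiv (m:=m) (n:=n))]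
    simp [Fintype.sum_sum_type, Fin.is_lt, mul_comm]
  have hGw : ∀ x y : ℝ, G.mulVec (fun i => if (i:ℕ) < m then x else y)
      = fun i : Fin (m+n) => if (i:ℕ) < m then (n:ℝ) * y else (m:ℝ) * x := by
    intro x y
    funext i
    simp only [mulVec, dotProduct]
    by_cases hi : (i:ℕ) < m
    · have h : ∀ j : Fin (m+n), G i j * (if (j:ℕ) < m then x else y)
          = (if (j:ℕ) < m then (0:ℝ) else y) := by
        intro j; rw [hGdef]; by_cases hj : (j:ℕ) < m <;> simp [hi, hj]
      rw [Finset.sum_congr rfl fun j _ => h j, hsum]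
      simp [hi]
    · have h : ∀ j : Fin (m+n), G i j * (if (j:ℕ) < m then x else y)
          = (if (j:ℕ) < m then x else (0:ℝ)) := by
        intro j; rw [hGdef]; by_cases hj : (j:ℕ) < m <;> simp [hi, hj]
      rw [Finset.sum_congr rfl fun j _ => h j, hsum]
      simp [hi]
  set v : Fin (m+n) → ℝ := fun i => if (i:ℕ) < m then a else b with hv
  have hSv : ((1 : Matrix (Fin (m + n)) (Fin (m + n)) ℝ) - lam • G).mulVec v
      = fun i : Fin (m+n) =>
          if (i:ℕ) < m then a - lam * ((n:ℝ)*b) else b - lam * ((m:ℝ)*a) := by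
    rw [sub_mulVec, one_mulVec, smul_mulVec, hv, hGw]
    funext i; by_cases hi : (i:ℕ) < m <;> simp [hi]
  have hS2v : (((1 : Matrix (Fin (m + n)) (Fin (m + n)) ℝ) - lam • G) ^ 2).mulVec v
      = fun i : Fin (m+n) => if (i:ℕ) < m
          then (a - lam * ((n:ℝ)*b)) - lam * ((n:ℝ) * (b - lam * ((m:ℝ)*a)))
          else (b - lam * ((m:ℝ)*a)) - lam * ((m:ℝ) * (a - lam * ((n:ℝ)*b))) := by
    rw [sq, ← mulVec_mulVec, hSv, sub_mulVec, one_mulVec, smul_mulVec, hGw]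
    funext i; by_cases hi : (i:ℕ) < m <;> simp [hi]
  have key1 : A * a - B * (n:ℝ) * b = 1 := by
    rw [ha, hb, hD]; field_simp; linear_combination B^2 * hμ2
  have key2 : A * b - B * (m:ℝ) * a = 1 := by
    rw [ha, hb, hD]; field_simp; linear_combination B^2 * hμ2
  have hMv : M.mulVec v = fun _ => 1 := by
    rw [hM, add_mulVec, sub_mulVec, one_mulVec, smul_mulVec, smul_mulVec, hS2v]
    rw [show G.mulVec v = fun i : Fin (m+n) => if (i:ℕ) < m then (n:ℝ)*b else (m:ℝ)*a from hGw a b]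
    funext i
    simp only [Pi.add_apply, Pi.sub_apply, Pi.smul_apply, smul_eq_mul, hv]
    by_cases hi : (i:ℕ) < m
    · simp only [hi, if_true]
      linear_combination key1
    · simp only [hi, if_false]
      linear_combination key2
  -- symmetry
  have hGsym : Gᵀ = G := by
    ext i j
    rw [transpose_apply, hGdef, hGdef]
    by_cases hi : (i:ℕ) < m <;> by_cases hj : (j:ℕ) < m <;> simp [hi, hj]
  have hMsym : Mᵀ = M := by
    rw [hM]
    rw [transpose_add, transpose_sub, transpose_smul, transpose_one, transpose_smul,
      transpose_pow, transpose_sub, transpose_one, transpose_smul, hGsym]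
  -- dot product chain
  have hdot : (fun _ : Fin (m + n) => (1 : ℝ)) ⬝ᵥ estar = (m:ℝ) * a + (n:ℝ) * b := by
    calc (fun _ : Fin (m + n) => (1 : ℝ)) ⬝ᵥ estar
        = (M.mulVec v) ⬝ᵥ estar := by rw [hMv]
      _ = (Mᵀ.mulVec v) ⬝ᵥ estar := by rw [hMsym]
      _ = v ⬝ᵥ (M.mulVec estar) := by rw [mulVec_transpose, ← dotProduct_mulVec]
      _ = v ⬝ᵥ (fun _ => 1) := by rw [hestar]
      _ = (m:ℝ) * a + (n:ℝ) * b := by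
          simp only [dotProduct, mul_one, hv]
          exact hsum a b
  rw [hdot, hd1, hd2]
  have hs2 : Real.sqrt ((m:ℝ)/2) ^ 2 = (m:ℝ)/2 := Real.sq_sqrt (by positivity)
  have ht2 : Real.sqrt ((n:ℝ)/2) ^ 2 = (n:ℝ)/2 := Real.sq_sqrt (by positivity)
  have hst : Real.sqrt ((m:ℝ)/2) * Real.sqrt ((n:ℝ)/2) = μ / 2 := by
    rw [← Real.sqrt_mul (by positivity)]
    rw [show ((m:ℝ)/2) * ((n:ℝ)/2) = ((m:ℝ)*n) * (1/2)^2 by ring]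
    rw [Real.sqrt_mul hmn0, Real.sqrt_sq (by norm_num)]
    rw [hμdef]; ring
  have hX : (Real.sqrt ((m:ℝ)/2) + Real.sqrt ((n:ℝ)/2)) ^ 2 = ((m:ℝ)+n)/2 + μ := by
    linear_combination hs2 + ht2 + 2*hst
  have hY : (Real.sqrt ((m:ℝ)/2) - Real.sqrt ((n:ℝ)/2)) ^ 2 = ((m:ℝ)+n)/2 - μ := by
    linear_combination hs2 + ht2 - 2*hst
  rw [hX, hY, ha, hb, hD]
  exact stmt14_aux (m:ℝ) (n:ℝ) μ A B hμ2 (ne_of_gt hd1pos) (ne_of_gt hd2pos)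
end

section
/- Let m ≥ 1, N := 2m, p, q ≥ 0, and let G be the N×N matrix of the (expected) planted-partition network with two groups of size m: G_{ij} = p if i and j belong to the same group and G_{ij} = q otherwise. Let λ ≥ 0, ρ := rσ² ≥ 0, set μ := m(p+q), and assume D := 1 − 2λμ + ρ(1 − λμ)² ≠ 0 and I − 2λG + ρ(I − λG)² invertible. Then the unique solution of (I − 2λG + ρ(I − λG)²)e* = 1 is e* = (1/D)·1 and the firm's maximized expected profit equals N/(2D). In particular, expected profits depend on (p,q) only through the sum p + q and not through the homophily ratio p/q. -/
open Matrix

lemma rowsum_pp (m : ℕ) (p q : ℝ) (i : Fin (2 * m)) :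
    (∑ j : Fin (2 * m), if (((i : ℕ) < m) ↔ ((j : ℕ) < m)) then p else q)
      = m * (p + q) := by
  rw [Fin.sum_univ_eq_sum_range (fun j => if (((i : ℕ) < m) ↔ (j < m)) then p else q)]
  rw [Finset.range_eq_Ico, ← Finset.sum_Ico_consecutive _ (Nat.zero_le m) (by omega : m ≤ 2 * m)]
  have hc1 : (Finset.Ico 0 m).card = m := by simp
  have hc2 : (Finset.Ico m (2 * m)).card = m := by simp [Nat.card_Ico]; omega
  by_cases hi : (i : ℕ) < m
  · have e1 : ∑ j ∈ Finset.Ico 0 m,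
        (if (((i : ℕ) < m) ↔ (j < m)) then p else q) = ∑ _j ∈ Finset.Ico 0 m, p :=
      Finset.sum_congr rfl (fun j hj => by
        simp only [Finset.mem_Ico] at hj
        exact if_pos (by constructor <;> intro <;> omega))
    have e2 : ∑ j ∈ Finset.Ico m (2 * m),
        (if (((i : ℕ) < m) ↔ (j < m)) then p else q) = ∑ _j ∈ Finset.Ico m (2 * m), q :=
      Finset.sum_congr rfl (fun j hj => by
        simp only [Finset.mem_Ico] at hj
        exact if_neg (by intro h; have := h.mp hi; omega))
    rw [e1, e2, Finset.sum_const, Finset.sum_const, hc1, hc2]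
    simp; ring
  · have e1 : ∑ j ∈ Finset.Ico 0 m,
        (if (((i : ℕ) < m) ↔ (j < m)) then p else q) = ∑ _j ∈ Finset.Ico 0 m, q :=
      Finset.sum_congr rfl (fun j hj => by
        simp only [Finset.mem_Ico] at hj
        exact if_neg (by intro h; exact hi (h.mpr hj.2)))
    have e2 : ∑ j ∈ Finset.Ico m (2 * m),
        (if (((i : ℕ) < m) ↔ (j < m)) then p else q) = ∑ _j ∈ Finset.Ico m (2 * m), p :=
      Finset.sum_congr rfl (fun j hj => by
        simp only [Finset.mem_Ico] at hj
        exact if_pos (by constructor <;> intro <;> omega))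
    rw [e1, e2, Finset.sum_const, Finset.sum_const, hc1, hc2]
    simp; ring

/-- In the (expected) planted-partition network with two groups of
size `m` (within-group intensity `p`, across-group intensity `q`), the unique
solution of `(I − 2λG + ρ(I − λG)²)e* = 1` is `e* = (1/D)·1` with
`D = 1 − 2λμ + ρ(1 − λμ)²`, `μ = m(p+q)`, and the maximized expected profit is
`N/(2D)`: profits depend on `(p,q)` only through `p + q`. -/
theorem stmt_16 (m : ℕ) (hm : 1 ≤ m) (p q lam ρ : ℝ)
    (hp : 0 ≤ p) (hq : 0 ≤ q) (hlam : 0 ≤ lam) (hρ : 0 ≤ ρ)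
    (G : Matrix (Fin (2 * m)) (Fin (2 * m)) ℝ)
    (hGdef : ∀ i j : Fin (2 * m),
      G i j = if (((i : ℕ) < m) ↔ ((j : ℕ) < m)) then p else q)
    (hD : 1 - 2 * lam * (m * (p + q)) + ρ * (1 - lam * (m * (p + q))) ^ 2 ≠ 0)
    (hinv : IsUnit ((1 : Matrix (Fin (2 * m)) (Fin (2 * m)) ℝ) - (2 * lam) • G +
      ρ • ((1 : Matrix (Fin (2 * m)) (Fin (2 * m)) ℝ) - lam • G) ^ 2)) :
    let one : Fin (2 * m) → ℝ := fun _ => 1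
    let D : ℝ := 1 - 2 * lam * (m * (p + q)) + ρ * (1 - lam * (m * (p + q))) ^ 2
    let estar : Fin (2 * m) → ℝ := (1 / D) • one
    (((1 : Matrix (Fin (2 * m)) (Fin (2 * m)) ℝ) - (2 * lam) • G +
        ρ • ((1 : Matrix (Fin (2 * m)) (Fin (2 * m)) ℝ) - lam • G) ^ 2).mulVec estar
      = one) ∧
    (∀ e : Fin (2 * m) → ℝ,
      ((1 : Matrix (Fin (2 * m)) (Fin (2 * m)) ℝ) - (2 * lam) • G +
        ρ • ((1 : Matrix (Fin (2 * m)) (Fin (2 * m)) ℝ) - lam • G) ^ 2).mulVec e = one →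
      e = estar) ∧
    (1 / 2) * (one ⬝ᵥ estar) = (2 * m : ℝ) / (2 * D) := by
  intro one D estar
  set μ : ℝ := m * (p + q) with hμ
  set M : Matrix (Fin (2 * m)) (Fin (2 * m)) ℝ :=
    (1 : Matrix (Fin (2 * m)) (Fin (2 * m)) ℝ) - (2 * lam) • G +
      ρ • ((1 : Matrix (Fin (2 * m)) (Fin (2 * m)) ℝ) - lam • G) ^ 2 with hM
  have hGone : G.mulVec one = μ • one := by
    funext i
    simp only [mulVec, dotProduct, one, Pi.smul_apply, smul_eq_mul, mul_one]
    simp only [hGdef, mul_one]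
    exact rowsum_pp m p q i
  have hAone : ((1 : Matrix (Fin (2 * m)) (Fin (2 * m)) ℝ) - lam • G).mulVec one
      = (1 - lam * μ) • one := by
    rw [sub_mulVec, smul_mulVec, hGone, one_mulVec]
    funext i; simp [one]
  have hMone : M.mulVec one = D • one := by
    rw [hM, add_mulVec, sub_mulVec, smul_mulVec, smul_mulVec, hGone, one_mulVec,
      sq, ← mulVec_mulVec, hAone, mulVec_smul, hAone]
    funext i
    simp only [Pi.add_apply, Pi.sub_apply, Pi.smul_apply, smul_eq_mul, one]
    show 1 - 2 * lam * (μ * 1) + ρ * ((1 - lam * μ) * ((1 - lam * μ) * 1)) = D * 1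
    simp only [D]; ring
  have hMe : M.mulVec estar = one := by
    show M.mulVec ((1 / D) • one) = one
    rw [mulVec_smul, hMone]
    funext i
    simp only [Pi.smul_apply, smul_eq_mul, one]
    field_simp
    exact div_self hD
  refine ⟨hMe, ?_, ?_⟩
  · intro e he
    have hdet : IsUnit M.det := (Matrix.isUnit_iff_isUnit_det M).mp hinv
    have h1 : M⁻¹ * M = 1 := Matrix.nonsing_inv_mul M hdet
    calc e = (M⁻¹ * M).mulVec e := by rw [h1, one_mulVec]
      _ = M⁻¹.mulVec (M.mulVec e) := by rw [← mulVec_mulVec]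
      _ = M⁻¹.mulVec (M.mulVec estar) := by rw [he, hMe]
      _ = (M⁻¹ * M).mulVec estar := by rw [mulVec_mulVec]
      _ = estar := by rw [h1, one_mulVec]
  · show (1 / 2) * (one ⬝ᵥ (1 / D) • one) = (2 * m : ℝ) / (2 * D)
    simp only [dotProduct, Pi.smul_apply, smul_eq_mul, one, one_mul, mul_one,
      Finset.sum_const, Finset.card_univ, Fintype.card_fin, nsmul_eq_mul]
    push_cast
    field_simp
end

section
/- Let G be an n×n real matrix, λ real with I − λG invertible, C := (I − λG)⁻¹, ρ := rσ² ≥ 0, M := Cᵀ(I − λ(G+Gᵀ))C + ρI, T an n×k {0,1}-matrix with exactly one 1 per row, and assume TᵀMT is invertible. Set α̂* := (TᵀMT)⁻¹TᵀCᵀ1, α := Tα̂*, e* := Cα, ψᵢ := ½(e*ᵢ)² − λ e*ᵢ Σⱼ gᵢⱼ e*ⱼ, and for each worker i let μᵢ := max{ψⱼ : worker j has the same type as i} − ψᵢ ≥ 0. Then the firm's expected profit 1ᵀe* − ½ρ αᵀα − Σᵢψᵢ − Σᵢμᵢ equals ½·1ᵀe* − Σᵢμᵢ; that is, with coarse contracts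 the maximized expected profit equals one-half of equilibrium output minus the sum of the workers' centrality rents. -/
open Matrix BigOperators Finset


private lemma aux_dp {m p : ℕ} (A : Matrix (Fin m) (Fin p) ℝ) (x : Fin m → ℝ)
    (y : Fin p → ℝ) : Aᵀ.mulVec x ⬝ᵥ y = x ⬝ᵥ A.mulVec y := by
  rw [Matrix.mulVec_transpose, ← Matrix.dotProduct_mulVec]

private lemma aux_dp' {m p : ℕ} (A : Matrix (Fin m) (Fin p) ℝ) (x : Fin p → ℝ)
    (y : Fin m → ℝ) : x ⬝ᵥ Aᵀ.mulVec y = A.mulVec x ⬝ᵥ y := by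
  rw [dotProduct_comm, aux_dp, dotProduct_comm]


/-- With coarse (type-based) contracts given by the assignment
matrix `T` (worker `i` has type `type i`), at the optimal coarse incentives
`α̂* = (TᵀMT)⁻¹TᵀCᵀ1` the workers' centrality rents `μᵢ = maxⱼ {ψⱼ : same type} − ψᵢ`
are nonnegative, and the firm's expected profit
`1ᵀe* − ½ραᵀα − Σᵢψᵢ − Σᵢμᵢ` equals `½·1ᵀe* − Σᵢμᵢ`. -/
theorem stmt_18 (n k : ℕ) (G : Matrix (Fin n) (Fin n) ℝ) (lam ρ : ℝ) (hρ : 0 ≤ ρ)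
    (hinv : IsUnit ((1 : Matrix (Fin n) (Fin n) ℝ) - lam • G))
    (type : Fin n → Fin k)
    (T : Matrix (Fin n) (Fin k) ℝ)
    (hT : ∀ i j, T i j = if type i = j then 1 else 0)
    (hTMT : IsUnit (Tᵀ * (((1 : Matrix (Fin n) (Fin n) ℝ) - lam • G)⁻¹ᵀ *
      ((1 : Matrix (Fin n) (Fin n) ℝ) - lam • (G + Gᵀ)) *
      ((1 : Matrix (Fin n) (Fin n) ℝ) - lam • G)⁻¹ +
      ρ • (1 : Matrix (Fin n) (Fin n) ℝ)) * T)) :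
    let C := ((1 : Matrix (Fin n) (Fin n) ℝ) - lam • G)⁻¹
    let M := Cᵀ * ((1 : Matrix (Fin n) (Fin n) ℝ) - lam • (G + Gᵀ)) * C +
      ρ • (1 : Matrix (Fin n) (Fin n) ℝ)
    let one : Fin n → ℝ := fun _ => 1
    let αhatstar := (Tᵀ * M * T)⁻¹.mulVec (Tᵀ.mulVec (Cᵀ.mulVec one))
    let α := T.mulVec αhatstar
    let estar := C.mulVec α
    let ψ : Fin n → ℝ := fun i =>
      (1 / 2) * (estar i) ^ 2 - lam * estar i * ∑ j, G i j * estar j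
    let μ : Fin n → ℝ := fun i =>
      (⨆ j : {j : Fin n // type j = type i}, ψ (j : Fin n)) - ψ i
    (∀ i, 0 ≤ μ i) ∧
    one ⬝ᵥ estar - (1 / 2) * ρ * (α ⬝ᵥ α) - (∑ i, ψ i) - (∑ i, μ i) =
      (1 / 2) * (one ⬝ᵥ estar) - ∑ i, μ i := by
  intro C M one αhatstar α estar ψ μ
  constructor
  · intro i
    have h : ψ i ≤ ⨆ j : {j : Fin n // type j = type i}, ψ (j : Fin n) :=
      le_ciSup (f := fun j : {j : Fin n // type j = type i} => ψ (j : Fin n))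
        (Set.Finite.bddAbove (Set.finite_range _)) ⟨i, rfl⟩
    simpa [μ] using sub_nonneg.mpr h
  · have hdet : IsUnit (Tᵀ * M * T).det :=
      (Matrix.isUnit_iff_isUnit_det _).mp hTMT
    have h1 : Tᵀ.mulVec (M.mulVec α) = Tᵀ.mulVec (Cᵀ.mulVec one) := by
      calc Tᵀ.mulVec (M.mulVec (T.mulVec αhatstar))
          = (Tᵀ * M * T).mulVec αhatstar := by
            rw [Matrix.mulVec_mulVec, Matrix.mulVec_mulVec, Matrix.mul_assoc]
        _ = ((Tᵀ * M * T) * (Tᵀ * M * T)⁻¹).mulVec (Tᵀ.mulVec (Cᵀ.mulVec one)) := by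
            rw [show αhatstar = (Tᵀ * M * T)⁻¹.mulVec (Tᵀ.mulVec (Cᵀ.mulVec one)) from rfl,
              Matrix.mulVec_mulVec]
        _ = Tᵀ.mulVec (Cᵀ.mulVec one) := by
            rw [Matrix.mul_nonsing_inv _ hdet, Matrix.one_mulVec]
    have h2 : one ⬝ᵥ estar = α ⬝ᵥ M.mulVec α := by
      calc one ⬝ᵥ estar = Cᵀ.mulVec one ⬝ᵥ α := (aux_dp C one α).symm
        _ = Tᵀ.mulVec (Cᵀ.mulVec one) ⬝ᵥ αhatstar := (aux_dp T (Cᵀ.mulVec one) αhatstar).symm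
        _ = Tᵀ.mulVec (M.mulVec α) ⬝ᵥ αhatstar := by rw [h1]
        _ = M.mulVec α ⬝ᵥ T.mulVec αhatstar := aux_dp T (M.mulVec α) αhatstar
        _ = α ⬝ᵥ M.mulVec α := dotProduct_comm _ _
    have h3 : α ⬝ᵥ M.mulVec α =
        estar ⬝ᵥ estar - 2 * lam * (estar ⬝ᵥ G.mulVec estar) + ρ * (α ⬝ᵥ α) := by
      have hsym : estar ⬝ᵥ Gᵀ.mulVec estar = estar ⬝ᵥ G.mulVec estar := by
        rw [aux_dp', dotProduct_comm]
      have hCt : α ⬝ᵥ (Cᵀ * ((1 : Matrix (Fin n) (Fin n) ℝ) - lam • (G + Gᵀ)) * C).mulVec α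
          = estar ⬝ᵥ ((1 : Matrix (Fin n) (Fin n) ℝ) - lam • (G + Gᵀ)).mulVec estar := by
        rw [Matrix.mul_assoc, ← Matrix.mulVec_mulVec, ← Matrix.mulVec_mulVec, aux_dp']
      rw [show (M : Matrix (Fin n) (Fin n) ℝ) =
        Cᵀ * ((1 : Matrix (Fin n) (Fin n) ℝ) - lam • (G + Gᵀ)) * C +
        ρ • (1 : Matrix (Fin n) (Fin n) ℝ) from rfl]
      rw [Matrix.add_mulVec, dotProduct_add, hCt, Matrix.sub_mulVec,
        dotProduct_sub, Matrix.one_mulVec, Matrix.smul_mulVec,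
        dotProduct_smul, Matrix.add_mulVec, dotProduct_add, hsym,
        Matrix.smul_mulVec, dotProduct_smul, Matrix.one_mulVec]
      simp only [smul_eq_mul]
      ring
    have h4 : (∑ i, ψ i) =
        (1 / 2) * (estar ⬝ᵥ estar) - lam * (estar ⬝ᵥ G.mulVec estar) := by
      rw [show estar ⬝ᵥ estar = ∑ i, estar i * estar i from rfl,
        show estar ⬝ᵥ G.mulVec estar = ∑ i, estar i * ∑ j, G i j * estar j from rfl,
        Finset.mul_sum, Finset.mul_sum, ← Finset.sum_sub_distrib]
      exact Finset.sum_congr rfl fun i _ => by simp only [ψ]; ring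
    have key : one ⬝ᵥ estar - (1 / 2) * ρ * (α ⬝ᵥ α) - (∑ i, ψ i) =
        (1 / 2) * (one ⬝ᵥ estar) := by
      rw [h4]; nlinarith [h2, h3]
    linarith [key]
end
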